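/- Let ℙ be a probability measure on ℝ that is absolutely continuous with respect to Lebesgue measure with a density ρ satisfying ρ(s) ≤ C for Lebesgue-almost every s, where C > 0. Let h : ℝ → ℝ be ℙ-integrable with h(s) ≥ m for ℙ-almost every s, let h̄ := ∫ h dℙ, and suppose h̄ > m. Then the Lebesgue measure of the set {s ∈ ℝ : h(s) ≤ h̄} is at least (∫ |h − h̄| dℙ) / (2·C·(h̄ − m)). -/

import Mathlib

open MeasureTheory
open scoped ENNReal

theorem stmt6 (P : Measure ℝ) [IsProbabilityMeasure P]
    (ρ : ℝ → ℝ≥0∞) (hP : P = volume.withDensity ρ)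
    (C : ℝ) (hC : 0 < C) (hρ : ∀ᵐ s ∂volume, ρ s ≤ ENNReal.ofReal C)
    (h : ℝ → ℝ) (hint : Integrable h P)
    (m : ℝ) (hm : ∀ᵐ s ∂P, m ≤ h s)
    (hbar : ℝ) (hhbar : hbar = ∫ s, h s ∂P) (hgt : m < hbar) :
    ENNReal.ofReal ((∫ s, |h s - hbar| ∂P) / (2 * C * (hbar - m))) ≤
      volume {s : ℝ | h s ≤ hbar} := by
  set S : Set ℝ := {s : ℝ | h s ≤ hbar} with hS
  -- integrability of the positive part
  have hintsub : Integrable (fun s => hbar - h s) P := (integrable_const hbar).sub hint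
  have hintmax : Integrable (fun s => max (hbar - h s) 0) P := hintsub.pos_part
  -- zero mean
  have hzero : ∫ s, (hbar - h s) ∂P = 0 := by
    rw [integral_sub (integrable_const hbar) hint, integral_const, probReal_univ]
    simp [hhbar]
  -- step A : ∫ |h - hbar| = 2 ∫ max (hbar - h) 0
  have hA : ∫ s, |h s - hbar| ∂P = 2 * ∫ s, max (hbar - h s) 0 ∂P := by
    have hptw : ∀ s, |h s - hbar| = (2 : ℝ) * max (hbar - h s) 0 - (hbar - h s) := by
      intro s
      rcases le_total (h s) hbar with hc | hc
      · rw [abs_of_nonpos (by linarith), max_eq_left (by linarith)]; ring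
      · rw [abs_of_nonneg (by linarith), max_eq_right (by linarith)]; ring
    calc ∫ s, |h s - hbar| ∂P
        = ∫ s, ((2 : ℝ) * max (hbar - h s) 0 - (hbar - h s)) ∂P := by
          exact integral_congr_ae (Filter.Eventually.of_forall hptw)
      _ = (∫ s, (2 : ℝ) * max (hbar - h s) 0 ∂P) - ∫ s, (hbar - h s) ∂P :=
          integral_sub (hintmax.const_mul 2) hintsub
      _ = 2 * ∫ s, max (hbar - h s) 0 ∂P := by rw [hzero, integral_const_mul]; ring
  set J : ℝ := ∫ s, max (hbar - h s) 0 ∂P with hJ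
  have hJnn : 0 ≤ J := integral_nonneg fun s => le_max_right _ _
  -- step B : ofReal J ≤ ofReal (hbar - m) * P S
  have hB : ENNReal.ofReal J ≤ ENNReal.ofReal (hbar - m) * P S := by
    have h1 : ENNReal.ofReal J = ∫⁻ s, ENNReal.ofReal (max (hbar - h s) 0) ∂P :=
      ofReal_integral_eq_lintegral_ofReal hintmax
        (Filter.Eventually.of_forall fun s => le_max_right _ _)
    have h2 : ∫⁻ s, ENNReal.ofReal (max (hbar - h s) 0) ∂P ≤
        ∫⁻ s, S.indicator (fun _ => ENNReal.ofReal (hbar - m)) s ∂P := by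
      refine lintegral_mono_ae (hm.mono fun s hs => ?_)
      rcases le_or_gt (h s) hbar with hc | hc
      · have : s ∈ S := hc
        rw [Set.indicator_of_mem this]
        exact ENNReal.ofReal_le_ofReal (max_le (by linarith) (by linarith))
      · have hmax : max (hbar - h s) 0 = 0 := max_eq_right (by linarith)
        simp [hmax]
    have h3 := lintegral_indicator_const_le (μ := P) S (ENNReal.ofReal (hbar - m))
    calc ENNReal.ofReal J ≤ _ := h1.le.trans h2
      _ ≤ _ := h3
  -- step C : P S ≤ ofReal C * volume S
  have hCvol : P S ≤ ENNReal.ofReal C * volume S := by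
    have hsub : S ⊆ toMeasurable volume S := subset_toMeasurable _ _
    have hmeas : MeasurableSet (toMeasurable volume S) := measurableSet_toMeasurable _ _
    calc P S ≤ P (toMeasurable volume S) := measure_mono hsub
      _ = ∫⁻ s in toMeasurable volume S, ρ s ∂volume := by
          rw [hP, withDensity_apply _ hmeas]
      _ ≤ ∫⁻ _ in toMeasurable volume S, ENNReal.ofReal C ∂volume :=
          lintegral_mono_ae (ae_restrict_of_ae hρ)
      _ = ENNReal.ofReal C * volume (toMeasurable volume S) := by
          rw [lintegral_const, Measure.restrict_apply_univ]
      _ = ENNReal.ofReal C * volume S := by rw [measure_toMeasurable]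
  -- combine
  rcases eq_or_ne (volume S) ∞ with hinf | hfin
  · rw [hinf]; exact le_top
  · have key : ENNReal.ofReal J ≤ ENNReal.ofReal ((hbar - m) * C) * volume S := by
      calc ENNReal.ofReal J ≤ ENNReal.ofReal (hbar - m) * P S := hB
        _ ≤ ENNReal.ofReal (hbar - m) * (ENNReal.ofReal C * volume S) :=
            mul_le_mul_right hCvol _
        _ = ENNReal.ofReal ((hbar - m) * C) * volume S := by
            rw [ENNReal.ofReal_mul (by linarith)]; ring
    have hkeyR : J ≤ (hbar - m) * C * (volume S).toReal := by
      have h4 := ENNReal.toReal_mono (ENNReal.mul_ne_top ENNReal.ofReal_ne_top hfin) key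
      rwa [ENNReal.toReal_mul, ENNReal.toReal_ofReal hJnn,
        ENNReal.toReal_ofReal (mul_nonneg (by linarith) hC.le)] at h4
    refine ENNReal.ofReal_le_of_le_toReal ?_
    rw [hA]
    have hden : 0 < 2 * C * (hbar - m) := by nlinarith
    rw [div_le_iff₀ hden]
    nlinarith [ (volume S).toReal ]
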